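/- Let A, N_1,…,N_m ∈ ℝ^{n×n}, X₀ ∈ ℝ^{n×q}, C ∈ ℝ^{p×n} and Ã, Ñ_1,…,Ñ_m ∈ ℝ^{r×r}, X̃₀ ∈ ℝ^{r×q}, C̃ ∈ ℝ^{p×r}, let v₀ ∈ ℝ^q, γ > 0, and let u ∈ L² be a continuous control. Let y_{x₀}(t) = C x_{x₀}(t) where x_{x₀} solves ẋ = A x + Σ_k N_k x u_k, x(0) = X₀ v₀, and let ỹ_{x₀}(t) = C̃ x̃_{x₀}(t) where x̃_{x₀} solves the reduced homogeneous system with matrices Ã, Ñ_k and x̃(0) = X̃₀ v₀. Then for all t ≥ 0, ‖y_{x₀}(t) − ỹ_{x₀}(t)‖₂² ≤ tr([C −C̃] Z^e_γ(t) [C −C̃]^⊤) · exp{∫₀^t ‖γ u⁰(v)‖₂² dv} · ‖v₀‖₂², where Z^e_γ solves Ż^e = A^e Z^e + Z^e (A^e)^⊤ + γ^{-2} Σ_k N_k^e Z^e (N_k^e)^⊤ with A^e = diag(A, Ã), N_k^e = diag(N_k, Ñ_k) and Z^e(0) = [X₀; X̃₀][X₀; X̃₀]^⊤, and u⁰ is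 taken with respect to the augmented matrices N_k^e. -/

import Mathlib

open MeasureTheory Matrix
open scoped Classical

set_option linter.unusedVariables false

attribute [local instance] Matrix.normedAddCommGroup Matrix.normedSpace

open scoped Topology
open Filter
set_option maxHeartbeats 1000000

/-- left multiplication inside a dot product moves as a transpose -/
lemma dot_mulVec_left {ι κ : Type*} [Fintype ι] [Fintype κ] (M : Matrix ι κ ℝ) (z : ι → ℝ) (v : κ → ℝ) :
    z ⬝ᵥ (M *ᵥ v) = (Mᵀ *ᵥ z) ⬝ᵥ v := by
  rw [Matrix.dotProduct_mulVec, ← Matrix.mulVec_transpose]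

/-- null vector of a symmetric PSD quadratic form is in the kernel -/
lemma quad_null {ι : Type*} [Fintype ι] [DecidableEq ι] (M : Matrix ι ι ℝ) (hsym : Mᵀ = M)
    (hpsd : ∀ y, 0 ≤ y ⬝ᵥ (M *ᵥ y)) {z : ι → ℝ} (hz : z ⬝ᵥ (M *ᵥ z) = 0) :
    M *ᵥ z = 0 := by
  have key : ∀ y : ι → ℝ, y ⬝ᵥ (M *ᵥ z) = 0 := by
    intro y
    have hcross : z ⬝ᵥ (M *ᵥ y) = y ⬝ᵥ (M *ᵥ z) := by
      rw [dot_mulVec_left, hsym, dotProduct_comm]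
    have hexp : ∀ s : ℝ, (z + s • y) ⬝ᵥ (M *ᵥ (z + s • y))
        = 2 * s * (y ⬝ᵥ (M *ᵥ z)) + s ^ 2 * (y ⬝ᵥ (M *ᵥ y)) := by
      intro s
      simp only [Matrix.mulVec_add, Matrix.mulVec_smul, dotProduct_add,
        add_dotProduct, smul_dotProduct, dotProduct_smul,
        smul_eq_mul, hz, hcross]
      ring
    set a := y ⬝ᵥ (M *ᵥ z) with ha
    set b := y ⬝ᵥ (M *ᵥ y) with hb
    have hbnn : 0 ≤ b := hpsd y
    rcases eq_or_lt_of_le hbnn with hb0 | hbpos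
    · have h1 := hpsd (z + (-a) • y); rw [hexp] at h1
      nlinarith [h1]
    · have h1 := hpsd (z + (-(a / b)) • y); rw [hexp] at h1
      have : 2 * (-(a / b)) * a + (-(a / b)) ^ 2 * b = -(a ^ 2 / b) := by
        field_simp; ring
      rw [this] at h1
      have h3 : a ^ 2 / b ≤ 0 := by linarith
      have h4 : a ^ 2 ≤ 0 := by
        calc a ^ 2 = a ^ 2 / b * b := by field_simp
          _ ≤ 0 := mul_nonpos_of_nonpos_of_nonneg h3 hbpos.le
      nlinarith [sq_nonneg a]
  funext i
  have := key (Pi.single i 1)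
  simpa [single_dotProduct] using this

/-- crude bound on a quadratic form by sum of absolute entries -/
lemma quad_bound {ι : Type*} [Fintype ι] (M : Matrix ι ι ℝ) (z : ι → ℝ) :
    |z ⬝ᵥ (M *ᵥ z)| ≤ (∑ i, ∑ j, |M i j|) * ∑ i, (z i) ^ 2 := by
  classical
  have hzz : ∀ i j : ι, |z i| * |z j| ≤ ∑ i, (z i) ^ 2 := by
    intro i j
    have h1 : (z i) ^ 2 ≤ ∑ i, (z i) ^ 2 :=
      Finset.single_le_sum (fun i _ => sq_nonneg (z i)) (Finset.mem_univ i)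
    have h2 : (z j) ^ 2 ≤ ∑ i, (z i) ^ 2 :=
      Finset.single_le_sum (fun i _ => sq_nonneg (z i)) (Finset.mem_univ j)
    nlinarith [sq_nonneg (|z i| - |z j|), sq_abs (z i), sq_abs (z j)]
  calc |z ⬝ᵥ (M *ᵥ z)| = |∑ i, ∑ j, z i * (M i j * z j)| := by
        simp [dotProduct, Matrix.mulVec, Finset.mul_sum]
    _ ≤ ∑ i, ∑ j, |z i * (M i j * z j)| := by
        refine (Finset.abs_sum_le_sum_abs _ _).trans ?_
        exact Finset.sum_le_sum fun i _ => Finset.abs_sum_le_sum_abs _ _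
    _ ≤ ∑ i, ∑ j, |M i j| * ∑ i, (z i) ^ 2 := by
        refine Finset.sum_le_sum fun i _ => Finset.sum_le_sum fun j _ => ?_
        rw [abs_mul, abs_mul]
        calc |z i| * (|M i j| * |z j|) = |M i j| * (|z i| * |z j|) := by ring
          _ ≤ |M i j| * ∑ i, (z i) ^ 2 := by
              exact mul_le_mul_of_nonneg_left (hzz i j) (abs_nonneg _)
    _ = (∑ i, ∑ j, |M i j|) * ∑ i, (z i) ^ 2 := by simp [Finset.sum_mul]
        
/-- Cauchy-Schwarz style bound for `M *ᵥ z` -/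
lemma mulVec_sq_bound {ι : Type*} [Fintype ι] (M : Matrix ι ι ℝ) (z : ι → ℝ) :
    ∑ i, ((M *ᵥ z) i) ^ 2 ≤ (∑ i, ∑ j, (M i j) ^ 2) * ∑ i, (z i) ^ 2 := by
  rw [Finset.sum_mul]
  refine Finset.sum_le_sum fun i _ => ?_
  simpa [Matrix.mulVec, dotProduct] using
    Finset.sum_mul_sq_le_sq_mul_sq Finset.univ (fun j => M i j) z

theorem core_bound {ι : Type*} [Fintype ι] [DecidableEq ι] {m : ℕ}
    (Ae : Matrix ι ι ℝ) (Ne : Fin m → Matrix ι ι ℝ)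
    (γ : ℝ) (hγ : 0 < γ)
    (u : ℝ → Fin m → ℝ) (hu : Continuous u)
    (w : ℝ → ι → ℝ)
    (hw : ∀ s, 0 ≤ s → HasDerivAt w (Ae *ᵥ w s + ∑ k, u s k • ((Ne k) *ᵥ w s)) s)
    (Ze : ℝ → Matrix ι ι ℝ)
    (hZe : ∀ s, 0 ≤ s → HasDerivAt Ze
      (Ae * Ze s + Ze s * Aeᵀ + (γ ^ 2)⁻¹ • ∑ k, Ne k * Ze s * (Ne k)ᵀ) s)
    (S0 : ℝ)
    (hinit : ∀ y : ι → ℝ, (y ⬝ᵥ w 0) ^ 2 ≤ S0 * (y ⬝ᵥ (Ze 0 *ᵥ y)))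
    (t : ℝ) (ht : 0 ≤ t) (y : ι → ℝ) :
    (y ⬝ᵥ w t) ^ 2 ≤ (y ⬝ᵥ (Ze t *ᵥ y)) *
      Real.exp (∫ v in (0:ℝ)..t, ∑ k, (γ * (if Ne k = 0 then (0:ℝ) else u v k)) ^ 2) * S0 := by
  set hf : ℝ → ℝ := fun v => ∑ k, (γ * (if Ne k = 0 then (0:ℝ) else u v k)) ^ 2 with hfdef
  have hfcont : Continuous hf := by
    refine continuous_finset_sum _ fun k _ => ?_
    by_cases hk : Ne k = 0 <;> simp only [hk, if_pos, if_neg, if_true, if_false] <;> fun_prop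
  have hfnn : ∀ v, 0 ≤ hf v := fun v => Finset.sum_nonneg fun k _ => sq_nonneg _
  set c : ℝ → ℝ := fun s => S0 * Real.exp (∫ v in (0:ℝ)..s, hf v) with hcdef
  have hcderiv : ∀ s, HasDerivAt c (hf s * c s) s := by
    intro s
    have h1 : HasDerivAt (fun s' => ∫ v in (0:ℝ)..s', hf v) (hf s) s :=
      (hfcont.integral_hasStrictDerivAt 0 s).hasDerivAt
    have h2 := (h1.exp).const_mul S0
    simp only [hcdef]
    refine h2.congr_deriv ?_
    ring
  -- entrywise derivative data
  have hZent : ∀ s, 0 ≤ s → ∀ i j, HasDerivAt (fun s' => Ze s' i j)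
      ((Ae * Ze s + Ze s * Aeᵀ + (γ ^ 2)⁻¹ • ∑ k, Ne k * Ze s * (Ne k)ᵀ) i j) s :=
    fun s hs i j => (hasDerivAt_pi.mp ((hasDerivAt_pi.mp (hZe s hs)) i)) j
  have hwent : ∀ s, 0 ≤ s → ∀ j, HasDerivAt (fun s' => w s' j)
      ((Ae *ᵥ w s + ∑ k, u s k • ((Ne k) *ᵥ w s)) j) s :=
    fun s hs j => (hasDerivAt_pi.mp (hw s hs)) j
  have hQder : ∀ (z : ι → ℝ) s, 0 ≤ s → HasDerivAt (fun s' => z ⬝ᵥ (Ze s' *ᵥ z))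
      (z ⬝ᵥ ((Ae * Ze s + Ze s * Aeᵀ + (γ ^ 2)⁻¹ • ∑ k, Ne k * Ze s * (Ne k)ᵀ) *ᵥ z)) s := by
    intro z s hs
    have heq : ∀ (M : Matrix ι ι ℝ), z ⬝ᵥ (M *ᵥ z) = ∑ i, z i * ∑ j, M i j * z j := by
      intro M; simp [dotProduct, Matrix.mulVec]
    simp only [heq]
    exact HasDerivAt.fun_sum fun i _ =>
      ((HasDerivAt.fun_sum fun j _ => (hZent s hs i j).mul_const (z j)).const_mul (z i))
  have hPder : ∀ (z : ι → ℝ) s, 0 ≤ s → HasDerivAt (fun s' => z ⬝ᵥ w s')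
      (z ⬝ᵥ (Ae *ᵥ w s + ∑ k, u s k • ((Ne k) *ᵥ w s))) s := by
    intro z s hs
    have heq : ∀ v : ι → ℝ, z ⬝ᵥ v = ∑ i, z i * v i := fun v => rfl
    simp only [heq]
    exact HasDerivAt.fun_sum fun i _ => (hwent s hs i).const_mul (z i)
  -- constants
  set CA : ℝ := ∑ i, ∑ j, |Aeᵀ i j| with hCAdef
  have hCAnn : 0 ≤ CA := Finset.sum_nonneg fun i _ => Finset.sum_nonneg fun j _ => abs_nonneg _
  set CN : Fin m → ℝ := fun k => ∑ i, ∑ j, ((Ne k)ᵀ i j) ^ 2 with hCNdef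
  have hCNnn : ∀ k, 0 ≤ CN k := fun k =>
    Finset.sum_nonneg fun i _ => Finset.sum_nonneg fun j _ => sq_nonneg _
  obtain ⟨sH, hsHmem, hsH⟩ : ∃ sH ∈ Set.Icc (0:ℝ) t, ∀ s ∈ Set.Icc (0:ℝ) t, hf s ≤ hf sH := by
    obtain ⟨sH, h1, h2⟩ := isCompact_Icc.exists_isMaxOn ⟨0, le_refl 0, ht⟩ hfcont.continuousOn
    exact ⟨sH, h1, fun s hs => h2 hs⟩
  set H : ℝ := hf sH with hHdef
  have hHnn : 0 ≤ H := hfnn sH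
  set K : ℝ := 2 * CA + (γ ^ 2)⁻¹ * (∑ k, CN k) + H + 1 with hKdef
  have hγ2 : (0:ℝ) ≤ (γ ^ 2)⁻¹ := by positivity
  -- the function F
  set F : ℝ → ℝ → (ι → ℝ) → ℝ := fun ε s z =>
    2 * (c s * (z ⬝ᵥ (Ze s *ᵥ z))) - 2 * (z ⬝ᵥ w s) ^ 2
      + ε * Real.exp (K * s) * ∑ i, (z i) ^ 2 with hFdef

  -- helper sum lemmas
  have hsummv : ∀ (G : Fin m → Matrix ι ι ℝ) (v : ι → ℝ),
      (∑ k, G k) *ᵥ v = ∑ k, (G k) *ᵥ v := by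
    intro G v; funext i
    simp only [Matrix.mulVec, dotProduct, Matrix.sum_apply, Finset.sum_apply, Finset.sum_mul]
    rw [Finset.sum_comm]
  have hdotsum : ∀ (g : Fin m → ι → ℝ) (v : ι → ℝ),
      v ⬝ᵥ (∑ k, g k) = ∑ k, v ⬝ᵥ g k := by
    intro g v
    simp only [dotProduct, Finset.sum_apply, Finset.mul_sum]
    rw [Finset.sum_comm]
  have hmain : ∀ ε : ℝ, 0 < ε → ∀ s ∈ Set.Icc (0:ℝ) t, ∀ z : ι → ℝ, 0 ≤ F ε s z := by
    intro ε hε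
    by_contra hbad
    push_neg at hbad
    obtain ⟨sb, hsbmem, zb, hzb⟩ := hbad
    have hFhom : ∀ s (α : ℝ) v, F ε s (α • v) = α ^ 2 * F ε s v := by
      intro s α v
      have h1 : ∑ i, ((α • v) i) ^ 2 = α ^ 2 * ∑ i, (v i) ^ 2 := by
        simp [mul_pow, Finset.mul_sum]
      simp only [hFdef, smul_dotProduct, dotProduct_smul, Matrix.mulVec_smul,
        smul_eq_mul, h1]
      ring
    have hzbne : zb ≠ 0 := by
      rintro rfl
      rw [hFdef] at hzb; simp at hzb
    have hzbnorm : (0:ℝ) < ‖zb‖ := norm_pos_iff.mpr hzbne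
    have hnbs : ‖zb‖⁻¹ • zb ∈ Metric.sphere (0 : ι → ℝ) 1 := by
      rw [mem_sphere_zero_iff_norm, norm_smul, norm_inv, norm_norm]
      exact inv_mul_cancel₀ hzbnorm.ne'
    have hnbF : F ε sb (‖zb‖⁻¹ • zb) < 0 := by
      rw [hFhom]
      exact mul_neg_of_pos_of_neg (pow_pos (inv_pos.mpr hzbnorm) 2) hzb
    -- clamped continuous version
    set cl : ℝ → ℝ := fun s => max 0 (min s t) with hcl
    have hclcont : Continuous cl := continuous_const.max (continuous_id.min continuous_const)
    have hclnn : ∀ s, 0 ≤ cl s := fun s => le_max_left _ _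
    have hclid : ∀ s, 0 ≤ s → s ≤ t → cl s = s := by
      intro s h1 h2; rw [hcl]; simp only [min_eq_left h2, max_eq_right h1]
    have hZc : Continuous fun s => Ze (cl s) := by
      rw [continuous_iff_continuousAt]
      exact fun s => ((hZe (cl s) (hclnn s)).continuousAt).comp hclcont.continuousAt
    have hwcC : Continuous fun s => w (cl s) := by
      rw [continuous_iff_continuousAt]
      exact fun s => ((hw (cl s) (hclnn s)).continuousAt).comp hclcont.continuousAt
    have hcC : Continuous c := by
      rw [continuous_iff_continuousAt]; exact fun s => (hcderiv s).continuousAt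
    set Fc : ℝ × (ι → ℝ) → ℝ := fun sz =>
      2 * (c (cl sz.1) * (sz.2 ⬝ᵥ (Ze (cl sz.1) *ᵥ sz.2))) - 2 * (sz.2 ⬝ᵥ w (cl sz.1)) ^ 2
        + ε * Real.exp (K * cl sz.1) * ∑ i, (sz.2 i) ^ 2 with hFcdef
    have hFcF : ∀ s v, 0 ≤ s → s ≤ t → Fc (s, v) = F ε s v := by
      intro s v h1 h2; rw [hFcdef, hFdef]; simp only [hclid s h1 h2]
    have hFccont : Continuous Fc := by
      have hdot1 : Continuous fun sz : ℝ × (ι → ℝ) => sz.2 ⬝ᵥ (Ze (cl sz.1) *ᵥ sz.2) := by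
        simp only [dotProduct, Matrix.mulVec]
        refine continuous_finset_sum _ fun i _ => ?_
        refine ((continuous_apply i).comp continuous_snd).mul ?_
        refine continuous_finset_sum _ fun j _ => ?_
        exact ((continuous_apply j).comp ((continuous_apply i).comp
          (hZc.comp continuous_fst))).mul ((continuous_apply j).comp continuous_snd)
      have hdot2 : Continuous fun sz : ℝ × (ι → ℝ) => sz.2 ⬝ᵥ w (cl sz.1) := by
        simp only [dotProduct]
        refine continuous_finset_sum _ fun i _ => ?_
        exact ((continuous_apply i).comp continuous_snd).mul
          ((continuous_apply i).comp (hwcC.comp continuous_fst))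
      have hsum : Continuous fun sz : ℝ × (ι → ℝ) => ∑ i, (sz.2 i) ^ 2 := by
        refine continuous_finset_sum _ fun i _ => ?_
        exact ((continuous_apply i).comp continuous_snd).pow 2
      have hexpc : Continuous fun sz : ℝ × (ι → ℝ) => Real.exp (K * cl sz.1) :=
        Real.continuous_exp.comp (continuous_const.mul (hclcont.comp continuous_fst))
      rw [hFcdef]
      exact ((continuous_const.mul ((hcC.comp (hclcont.comp continuous_fst)).mul hdot1)).sub
        (continuous_const.mul (hdot2.pow 2))).add ((continuous_const.mul hexpc).mul hsum)
    set Bad : Set (ℝ × (ι → ℝ)) :=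
      (Set.Icc 0 t ×ˢ Metric.sphere (0:ι → ℝ) 1) ∩ Fc ⁻¹' Set.Iic 0 with hBaddef
    have hBadcpt : IsCompact Bad :=
      ((isCompact_Icc).prod (isCompact_sphere _ _)).inter_right
        (isClosed_Iic.preimage hFccont)
    have hBadne : Bad.Nonempty := by
      refine ⟨(sb, ‖zb‖⁻¹ • zb), Set.mem_inter (Set.mem_prod.mpr ⟨hsbmem, hnbs⟩) ?_⟩
      simp only [Set.mem_preimage, Set.mem_Iic]
      rw [hFcF sb _ hsbmem.1 hsbmem.2]
      exact hnbF.le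
    set Bs : Set ℝ := Prod.fst '' Bad with hBsdef
    have hBscpt : IsCompact Bs := hBadcpt.image continuous_fst
    have hBsne : Bs.Nonempty := hBadne.image _
    set s₀ : ℝ := sInf Bs with hs₀def
    have hs₀memBs : s₀ ∈ Bs := hBscpt.sInf_mem hBsne
    obtain ⟨pz, hpzBad, hpz1⟩ := hs₀memBs
    obtain ⟨hpzmem, hpzF⟩ := hpzBad
    obtain ⟨hpzIcc, hpzsph⟩ := Set.mem_prod.mp hpzmem
    set z : ι → ℝ := pz.2 with hzdef
    have hs₀Icc : s₀ ∈ Set.Icc (0:ℝ) t := hpz1 ▸ hpzIcc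
    have hzF0 : F ε s₀ z ≤ 0 := by
      have h1 : Fc pz ≤ 0 := hpzF
      have h2 : Fc (pz.1, pz.2) ≤ 0 := by rwa [Prod.mk.eta]
      rw [hFcF _ _ hpzIcc.1 hpzIcc.2] at h2
      rwa [hpz1] at h2
    have hs₀lb : ∀ s' ∈ Bs, s₀ ≤ s' := fun s' hs' => csInf_le hBscpt.bddBelow hs'
    have hgood : ∀ s, 0 ≤ s → s < s₀ → ∀ v : ι → ℝ, 0 ≤ F ε s v := by
      intro s h0 hlt v
      rcases eq_or_ne v 0 with rfl | hv
      · rw [hFdef]; simp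
      by_contra hneg
      push_neg at hneg
      have hsmem : s ∈ Set.Icc (0:ℝ) t := ⟨h0, le_trans hlt.le hs₀Icc.2⟩
      have hvp : 0 < ‖v‖ := norm_pos_iff.mpr hv
      have hmem : (s, ‖v‖⁻¹ • v) ∈ Bad := by
        refine Set.mem_inter (Set.mem_prod.mpr ⟨hsmem, ?_⟩) ?_
        · rw [mem_sphere_zero_iff_norm, norm_smul, norm_inv, norm_norm]
          exact inv_mul_cancel₀ hvp.ne'
        · simp only [Set.mem_preimage, Set.mem_Iic]
          rw [hFcF _ _ hsmem.1 hsmem.2, hFhom]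
          exact (mul_neg_of_pos_of_neg (pow_pos (inv_pos.mpr hvp) 2) hneg).le
      exact absurd (hs₀lb s ⟨(s, ‖v‖⁻¹ • v), hmem, rfl⟩) (not_le.mpr hlt)
    have hznorm : ‖z‖ = 1 := mem_sphere_zero_iff_norm.mp hpzsph
    have hzne : z ≠ 0 := by
      intro h; rw [h, norm_zero] at hznorm; exact one_ne_zero hznorm.symm
    have hSzpos : 0 < ∑ i, (z i) ^ 2 := by
      obtain ⟨i, hi⟩ := Function.ne_iff.mp hzne
      exact Finset.sum_pos' (fun j _ => sq_nonneg _)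
        ⟨i, Finset.mem_univ i, lt_of_le_of_ne (sq_nonneg _) (ne_comm.mp (pow_ne_zero 2 hi))⟩
    have hc0 : c 0 = S0 := by rw [hcdef]; simp
    have hF0y : ∀ v : ι → ℝ, 0 ≤ 2 * (c 0 * (v ⬝ᵥ (Ze 0 *ᵥ v))) - 2 * (v ⬝ᵥ w 0) ^ 2 := by
      intro v; rw [hc0]; have := hinit v; linarith
    have hs₀pos : 0 < s₀ := by
      rcases lt_or_eq_of_le hs₀Icc.1 with h | h
      · exact h
      · exfalso
        have h1 : F ε s₀ z ≤ 0 := hzF0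
        rw [← h] at h1
        rw [hFdef] at h1; simp only at h1
        have h2 := hF0y z
        have h3 : Real.exp (K * 0) = 1 := by rw [mul_zero, Real.exp_zero]
        rw [h3] at h1
        nlinarith [mul_pos hε hSzpos]
    have hFs₀ : ∀ v : ι → ℝ, 0 ≤ F ε s₀ v := by
      intro v
      have hQc : ContinuousAt (fun s => v ⬝ᵥ (Ze s *ᵥ v)) s₀ :=
        (hQder v s₀ hs₀Icc.1).continuousAt
      have hPc : ContinuousAt (fun s => v ⬝ᵥ w s) s₀ := (hPder v s₀ hs₀Icc.1).continuousAt
      have hexpC : Continuous fun s : ℝ => ε * Real.exp (K * s) * ∑ i, (v i) ^ 2 :=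
        (continuous_const.mul (Real.continuous_exp.comp
          (continuous_const.mul continuous_id))).mul continuous_const
      have hφc : ContinuousAt (fun s => F ε s v) s₀ := by
        rw [hFdef]; simp only
        exact (((continuousAt_const.mul ((hcC.continuousAt).mul hQc))).sub
          (continuousAt_const.mul (hPc.pow 2))).add hexpC.continuousAt
      have hNB : (𝓝[Set.Ioo (0:ℝ) s₀] s₀).NeBot := by
        apply mem_closure_iff_nhdsWithin_neBot.mp
        rw [closure_Ioo hs₀pos.ne]
        exact ⟨hs₀pos.le, le_refl s₀⟩
      refine ge_of_tendsto (hφc.tendsto.mono_left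
        (nhdsWithin_le_nhds : 𝓝[Set.Ioo (0:ℝ) s₀] s₀ ≤ 𝓝 s₀)) ?_
      filter_upwards [self_mem_nhdsWithin] with s hs
      exact hgood s hs.1.le hs.2 v
    have hzeq : F ε s₀ z = 0 := le_antisymm hzF0 (hFs₀ z)
    -- the symmetric PSD matrix with kernel z
    set κ : ℝ := ε * Real.exp (K * s₀) with hκdef
    have hκpos : 0 < κ := mul_pos hε (Real.exp_pos _)
    have hvmv : ∀ (α β v : ι → ℝ), (vecMulVec α β) *ᵥ v = (β ⬝ᵥ v) • α := by
      intro α β v; funext i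
      simp only [Matrix.mulVec, Matrix.vecMulVec_apply, dotProduct, Pi.smul_apply,
        smul_eq_mul, Finset.sum_mul]
      exact Finset.sum_congr rfl fun j _ => by ring
    set M : Matrix ι ι ℝ := c s₀ • (Ze s₀ + (Ze s₀)ᵀ) + (-2 : ℝ) • vecMulVec (w s₀) (w s₀)
      + κ • (1 : Matrix ι ι ℝ) with hMdef
    have hMform : ∀ v : ι → ℝ, v ⬝ᵥ (M *ᵥ v) = F ε s₀ v := by
      intro v
      have h1 : v ⬝ᵥ ((Ze s₀)ᵀ *ᵥ v) = v ⬝ᵥ (Ze s₀ *ᵥ v) := by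
        rw [dot_mulVec_left, Matrix.transpose_transpose, dotProduct_comm]
      have h2 : v ⬝ᵥ ((vecMulVec (w s₀) (w s₀)) *ᵥ v) = (v ⬝ᵥ w s₀) ^ 2 := by
        rw [hvmv, dotProduct_smul, smul_eq_mul, dotProduct_comm]; ring
      have h3 : v ⬝ᵥ ((1 : Matrix ι ι ℝ) *ᵥ v) = ∑ i, (v i) ^ 2 := by
        rw [Matrix.one_mulVec]; simp [dotProduct, sq]
      rw [hMdef, hFdef]
      simp only [Matrix.add_mulVec, Matrix.smul_mulVec, dotProduct_add,
        dotProduct_smul, smul_eq_mul]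
      rw [h1, h2, h3, hκdef]
      ring
    have hMsym : Mᵀ = M := by
      have hvt : (vecMulVec (w s₀) (w s₀))ᵀ = vecMulVec (w s₀) (w s₀) := by
        funext i j; simp only [Matrix.transpose_apply, Matrix.vecMulVec_apply]; ring
      rw [hMdef]
      rw [Matrix.transpose_add, Matrix.transpose_add, Matrix.transpose_smul,
        Matrix.transpose_smul, Matrix.transpose_smul, Matrix.transpose_add,
        Matrix.transpose_transpose, Matrix.transpose_one, hvt,
        add_comm ((Ze s₀)ᵀ) (Ze s₀)]
    have hMpsd : ∀ v, 0 ≤ v ⬝ᵥ (M *ᵥ v) := fun v => (hMform v) ▸ hFs₀ v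
    have hMz0 : z ⬝ᵥ (M *ᵥ z) = 0 := by rw [hMform]; exact hzeq
    have hMz : M *ᵥ z = 0 := quad_null M hMsym hMpsd hMz0
    have hkey : c s₀ • ((Ze s₀ + (Ze s₀)ᵀ) *ᵥ z)
        = (2 * (z ⬝ᵥ w s₀)) • w s₀ + (-κ) • z := by
      have h0 := hMz
      rw [hMdef] at h0
      simp only [Matrix.add_mulVec, Matrix.smul_mulVec, Matrix.one_mulVec, hvmv] at h0
      funext i
      have h0i := congrFun h0 i
      simp only [Pi.add_apply, Pi.smul_apply, smul_eq_mul, Pi.zero_apply] at h0i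
      simp only [Matrix.add_mulVec, Pi.add_apply, Pi.smul_apply, smul_eq_mul]
      have hcomm : w s₀ ⬝ᵥ z = z ⬝ᵥ w s₀ := dotProduct_comm _ _
      rw [hcomm] at h0i
      linarith
    -- auxiliary vectors
    set a : ι → ℝ := Aeᵀ *ᵥ z with hadef
    set bb : Fin m → (ι → ℝ) := fun k => (Ne k)ᵀ *ᵥ z with hbbdef
    -- derivative of φ at s₀
    have hfun : (fun s => F ε s z) = (fun s =>
        2 * (c s * (z ⬝ᵥ (Ze s *ᵥ z))) - 2 * ((z ⬝ᵥ w s) * (z ⬝ᵥ w s))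
          + ε * Real.exp (K * s) * ∑ i, (z i) ^ 2) := by
      funext s; rw [hFdef]; ring
    have hφ' : HasDerivAt (fun s => F ε s z)
        (2 * (hf s₀ * c s₀ * (z ⬝ᵥ (Ze s₀ *ᵥ z)) + c s₀
            * (z ⬝ᵥ ((Ae * Ze s₀ + Ze s₀ * Aeᵀ + (γ ^ 2)⁻¹ • ∑ k, Ne k * Ze s₀ * (Ne k)ᵀ) *ᵥ z)))
          - 2 * ((z ⬝ᵥ (Ae *ᵥ w s₀ + ∑ k, u s₀ k • ((Ne k) *ᵥ w s₀))) * (z ⬝ᵥ w s₀)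
            + (z ⬝ᵥ w s₀) * (z ⬝ᵥ (Ae *ᵥ w s₀ + ∑ k, u s₀ k • ((Ne k) *ᵥ w s₀))))
          + ε * (Real.exp (K * s₀) * K) * ∑ i, (z i) ^ 2) s₀ := by
      rw [hfun]
      have h1 := (hcderiv s₀).mul (hQder z s₀ hs₀Icc.1)
      have h2 := (hPder z s₀ hs₀Icc.1).mul (hPder z s₀ hs₀Icc.1)
      have hK1 : HasDerivAt (fun s : ℝ => K * s) K s₀ := by
        simpa using (hasDerivAt_id s₀).const_mul K
      have h3 := ((hK1.exp).const_mul ε).mul_const (∑ i, (z i) ^ 2)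
      exact ((h1.const_mul 2).sub (h2.const_mul 2)).add h3
    -- scalar identities
    have hq'val : z ⬝ᵥ ((Ae * Ze s₀ + Ze s₀ * Aeᵀ + (γ ^ 2)⁻¹ • ∑ k, Ne k * Ze s₀ * (Ne k)ᵀ) *ᵥ z)
        = a ⬝ᵥ ((Ze s₀ + (Ze s₀)ᵀ) *ᵥ z)
          + (γ ^ 2)⁻¹ * ∑ k, (bb k) ⬝ᵥ (Ze s₀ *ᵥ (bb k)) := by
      have e1 : z ⬝ᵥ ((Ae * Ze s₀) *ᵥ z) = a ⬝ᵥ (Ze s₀ *ᵥ z) := by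
        rw [← Matrix.mulVec_mulVec, dot_mulVec_left]
      have e2 : z ⬝ᵥ ((Ze s₀ * Aeᵀ) *ᵥ z) = a ⬝ᵥ ((Ze s₀)ᵀ *ᵥ z) := by
        rw [← Matrix.mulVec_mulVec, dot_mulVec_left, dotProduct_comm]
      have e3 : ∀ k, z ⬝ᵥ ((Ne k * Ze s₀ * (Ne k)ᵀ) *ᵥ z) = (bb k) ⬝ᵥ (Ze s₀ *ᵥ (bb k)) := by
        intro k
        rw [← Matrix.mulVec_mulVec, ← Matrix.mulVec_mulVec, dot_mulVec_left]
      rw [Matrix.add_mulVec, Matrix.add_mulVec, dotProduct_add, dotProduct_add,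
        Matrix.smul_mulVec, dotProduct_smul, smul_eq_mul, hsummv, hdotsum,
        e1, e2, Matrix.add_mulVec, dotProduct_add]
      congr 2
      exact Finset.sum_congr rfl fun k _ => e3 k
    have hp'val : z ⬝ᵥ (Ae *ᵥ w s₀ + ∑ k, u s₀ k • ((Ne k) *ᵥ w s₀))
        = a ⬝ᵥ w s₀ + ∑ k, u s₀ k * ((bb k) ⬝ᵥ w s₀) := by
      rw [dotProduct_add, hdotsum, dot_mulVec_left]
      congr 1
      refine Finset.sum_congr rfl fun k _ => ?_
      rw [dotProduct_smul, smul_eq_mul, dot_mulVec_left]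
    have hQzrel : 2 * (c s₀ * (z ⬝ᵥ (Ze s₀ *ᵥ z)))
        = 2 * (z ⬝ᵥ w s₀) ^ 2 - κ * ∑ i, (z i) ^ 2 := by
      have h1 := hzeq
      rw [hFdef] at h1; simp only at h1
      rw [hκdef]; linarith
    have hbform : ∀ k, 2 * ((bb k) ⬝ᵥ w s₀) ^ 2 - κ * ∑ i, (bb k i) ^ 2
        ≤ 2 * (c s₀ * ((bb k) ⬝ᵥ (Ze s₀ *ᵥ (bb k)))) := by
      intro k
      have h1 := hFs₀ (bb k)
      rw [hFdef] at h1; simp only at h1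
      rw [hκdef]; linarith
    have hperk : ∀ k, 0 ≤ 2 * (γ * (if Ne k = 0 then (0:ℝ) else u s₀ k)) ^ 2 * (z ⬝ᵥ w s₀) ^ 2
        - 4 * (z ⬝ᵥ w s₀) * (u s₀ k * ((bb k) ⬝ᵥ w s₀))
        + 2 * ((γ ^ 2)⁻¹ * ((bb k) ⬝ᵥ w s₀) ^ 2) := by
      intro k
      by_cases hk : Ne k = 0
      · have hb0 : bb k = 0 := by rw [hbbdef]; simp only [hk, Matrix.transpose_zero,
          Matrix.zero_mulVec]
        rw [hb0, if_pos hk]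
        simp
      · have hginv : γ * γ⁻¹ = 1 := mul_inv_cancel₀ hγ.ne'
        have hg2 : (γ ^ 2)⁻¹ = γ⁻¹ * γ⁻¹ := by rw [sq, mul_inv]
        rw [if_neg hk, hg2]
        have hmid : γ * u s₀ k * (z ⬝ᵥ w s₀) * (γ⁻¹ * ((bb k) ⬝ᵥ w s₀))
            = u s₀ k * (z ⬝ᵥ w s₀) * ((bb k) ⬝ᵥ w s₀) := by
          calc γ * u s₀ k * (z ⬝ᵥ w s₀) * (γ⁻¹ * ((bb k) ⬝ᵥ w s₀))
              = (γ * γ⁻¹) * (u s₀ k * (z ⬝ᵥ w s₀) * ((bb k) ⬝ᵥ w s₀)) := by ring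
            _ = u s₀ k * (z ⬝ᵥ w s₀) * ((bb k) ⬝ᵥ w s₀) := by rw [hginv]; ring
        nlinarith [sq_nonneg (γ * u s₀ k * (z ⬝ᵥ w s₀) - γ⁻¹ * ((bb k) ⬝ᵥ w s₀)), hmid]
    have hsumineq : 0 ≤ 2 * hf s₀ * (z ⬝ᵥ w s₀) ^ 2
        - 4 * (z ⬝ᵥ w s₀) * ∑ k, u s₀ k * ((bb k) ⬝ᵥ w s₀)
        + 2 * ((γ ^ 2)⁻¹ * ∑ k, ((bb k) ⬝ᵥ w s₀) ^ 2) := by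
      have h := Finset.sum_nonneg fun k (_ : k ∈ Finset.univ) => hperk k
      have hA : ∑ k, 2 * (γ * (if Ne k = 0 then (0:ℝ) else u s₀ k)) ^ 2 * (z ⬝ᵥ w s₀) ^ 2
          = 2 * hf s₀ * (z ⬝ᵥ w s₀) ^ 2 := by
        rw [hfdef]; simp only
        rw [Finset.mul_sum, Finset.sum_mul]
      have hB : ∑ k, 4 * (z ⬝ᵥ w s₀) * (u s₀ k * ((bb k) ⬝ᵥ w s₀))
          = 4 * (z ⬝ᵥ w s₀) * ∑ k, u s₀ k * ((bb k) ⬝ᵥ w s₀) := by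
        rw [Finset.mul_sum]
      have hC : ∑ k, 2 * ((γ ^ 2)⁻¹ * ((bb k) ⬝ᵥ w s₀) ^ 2)
          = 2 * ((γ ^ 2)⁻¹ * ∑ k, ((bb k) ⬝ᵥ w s₀) ^ 2) := by
        rw [Finset.mul_sum, Finset.mul_sum]
      calc (0:ℝ) ≤ ∑ k, (2 * (γ * (if Ne k = 0 then (0:ℝ) else u s₀ k)) ^ 2 * (z ⬝ᵥ w s₀) ^ 2
            - 4 * (z ⬝ᵥ w s₀) * (u s₀ k * ((bb k) ⬝ᵥ w s₀))
            + 2 * ((γ ^ 2)⁻¹ * ((bb k) ⬝ᵥ w s₀) ^ 2)) := h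
        _ = 2 * hf s₀ * (z ⬝ᵥ w s₀) ^ 2
            - 4 * (z ⬝ᵥ w s₀) * ∑ k, u s₀ k * ((bb k) ⬝ᵥ w s₀)
            + 2 * ((γ ^ 2)⁻¹ * ∑ k, ((bb k) ⬝ᵥ w s₀) ^ 2) := by
          rw [Finset.sum_add_distrib, Finset.sum_sub_distrib, hA, hB, hC]
    have hadotz : a ⬝ᵥ z ≤ CA * ∑ i, (z i) ^ 2 := by
      have h1 : a ⬝ᵥ z = z ⬝ᵥ (Aeᵀ *ᵥ z) := by rw [hadef, dotProduct_comm]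
      rw [h1, hCAdef]
      exact le_trans (le_abs_self _) (quad_bound Aeᵀ z)
    have hsumbb : ∑ k, ∑ i, (bb k i) ^ 2 ≤ (∑ k, CN k) * ∑ i, (z i) ^ 2 := by
      rw [Finset.sum_mul]
      refine Finset.sum_le_sum fun k _ => ?_
      rw [hCNdef, hbbdef]; exact mulVec_sq_bound _ z
    have hfH : hf s₀ ≤ H := hsH s₀ hs₀Icc
    have hkeya : c s₀ * (a ⬝ᵥ ((Ze s₀ + (Ze s₀)ᵀ) *ᵥ z))
        = 2 * (z ⬝ᵥ w s₀) * (a ⬝ᵥ w s₀) - κ * (a ⬝ᵥ z) := by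
      have h1 := congrArg (fun v => a ⬝ᵥ v) hkey
      simp only [dotProduct_smul, dotProduct_add, smul_eq_mul] at h1
      linarith
    have hSQ : 2 * ∑ k, ((bb k) ⬝ᵥ w s₀) ^ 2 - κ * ∑ k, ∑ i, (bb k i) ^ 2
        ≤ 2 * ∑ k, c s₀ * ((bb k) ⬝ᵥ (Ze s₀ *ᵥ (bb k))) := by
      rw [Finset.mul_sum, Finset.mul_sum, Finset.mul_sum, ← Finset.sum_sub_distrib]
      refine Finset.sum_le_sum fun k _ => ?_
      have := hbform k
      rw [Finset.mul_sum] at this ⊢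
      linarith [this]
    -- assemble the lower bound on the derivative value
    have E1 : c s₀
        * (z ⬝ᵥ ((Ae * Ze s₀ + Ze s₀ * Aeᵀ + (γ ^ 2)⁻¹ • ∑ k, Ne k * Ze s₀ * (Ne k)ᵀ) *ᵥ z))
        = (2 * (z ⬝ᵥ w s₀) * (a ⬝ᵥ w s₀) - κ * (a ⬝ᵥ z))
          + (γ ^ 2)⁻¹ * ∑ k, c s₀ * ((bb k) ⬝ᵥ (Ze s₀ *ᵥ (bb k))) := by
      rw [hq'val, mul_add, hkeya]
      congr 1
      rw [Finset.mul_sum, Finset.mul_sum]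
      rw [Finset.mul_sum]
      refine Finset.sum_congr rfl fun k _ => by ring
    have P1 : hf s₀ * (κ * ∑ i, (z i) ^ 2) ≤ H * (κ * ∑ i, (z i) ^ 2) :=
      mul_le_mul_of_nonneg_right hfH (mul_nonneg hκpos.le (Finset.sum_nonneg fun i _ => sq_nonneg _))
    have P2 : κ * (a ⬝ᵥ z) ≤ κ * (CA * ∑ i, (z i) ^ 2) :=
      mul_le_mul_of_nonneg_left hadotz hκpos.le
    have P3 : (γ ^ 2)⁻¹ * (κ * ∑ k, ∑ i, (bb k i) ^ 2)
        ≤ (γ ^ 2)⁻¹ * (κ * ((∑ k, CN k) * ∑ i, (z i) ^ 2)) :=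
      mul_le_mul_of_nonneg_left (mul_le_mul_of_nonneg_left hsumbb hκpos.le) hγ2
    have P4 : (γ ^ 2)⁻¹ * (2 * ∑ k, ((bb k) ⬝ᵥ w s₀) ^ 2 - κ * ∑ k, ∑ i, (bb k i) ^ 2)
        ≤ (γ ^ 2)⁻¹ * (2 * ∑ k, c s₀ * ((bb k) ⬝ᵥ (Ze s₀ *ᵥ (bb k)))) :=
      mul_le_mul_of_nonneg_left hSQ hγ2
    have P5 : 0 < κ * ∑ i, (z i) ^ 2 := mul_pos hκpos hSzpos
    have E3 : ε * (Real.exp (K * s₀) * K) * ∑ i, (z i) ^ 2 = K * (κ * ∑ i, (z i) ^ 2) := by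
      rw [hκdef]; ring
    have E6 : K * (κ * ∑ i, (z i) ^ 2) = 2 * CA * (κ * ∑ i, (z i) ^ 2)
        + (γ ^ 2)⁻¹ * ((∑ k, CN k) * (κ * ∑ i, (z i) ^ 2))
        + H * (κ * ∑ i, (z i) ^ 2) + κ * ∑ i, (z i) ^ 2 := by
      rw [hKdef]; ring
    have E5 := congrArg (fun r => hf s₀ * r) hQzrel
    have hDpos : 0 < 2 * (hf s₀ * c s₀ * (z ⬝ᵥ (Ze s₀ *ᵥ z)) + c s₀
          * (z ⬝ᵥ ((Ae * Ze s₀ + Ze s₀ * Aeᵀ + (γ ^ 2)⁻¹ • ∑ k, Ne k * Ze s₀ * (Ne k)ᵀ) *ᵥ z)))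
        - 2 * ((z ⬝ᵥ (Ae *ᵥ w s₀ + ∑ k, u s₀ k • ((Ne k) *ᵥ w s₀))) * (z ⬝ᵥ w s₀)
          + (z ⬝ᵥ w s₀) * (z ⬝ᵥ (Ae *ᵥ w s₀ + ∑ k, u s₀ k • ((Ne k) *ᵥ w s₀))))
        + ε * (Real.exp (K * s₀) * K) * ∑ i, (z i) ^ 2 := by
      rw [hp'val, E1, E3]
      linarith [hsumineq, P1, P2, P3, P4, P5, E5, E6]
    -- derive the contradiction via the slope
    have hslope := hasDerivAt_iff_tendsto_slope.mp hφ'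
    have hmono : 𝓝[<] s₀ ≤ 𝓝[≠] s₀ :=
      nhdsWithin_mono _ fun x (hx : x < s₀) => ne_of_lt hx
    have hev1 : ∀ᶠ s in 𝓝[<] s₀, 0 < slope (fun s => F ε s z) s₀ s :=
      (hslope.mono_left hmono).eventually (eventually_gt_nhds hDpos)
    have hev2 : ∀ᶠ s in 𝓝[<] s₀, 0 < s := by
      filter_upwards [Ioo_mem_nhdsLT_of_mem (⟨hs₀pos, le_refl s₀⟩ : s₀ ∈ Set.Ioc 0 s₀)]
        with s hs using hs.1
    have hev3 : ∀ᶠ s in 𝓝[<] s₀, s < s₀ := eventually_mem_nhdsWithin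
    obtain ⟨s1, ⟨hs1slope, hs1pos⟩, hs1lt⟩ := ((hev1.and hev2).and hev3).exists
    have hFs1 : 0 ≤ F ε s1 z := hgood s1 hs1pos.le hs1lt z
    rw [slope_def_field] at hs1slope
    have hden : s1 - s₀ < 0 := sub_neg.mpr hs1lt
    have hnum : F ε s1 z - F ε s₀ z < 0 := by
      by_contra hge
      push_neg at hge
      have := div_nonpos_of_nonneg_of_nonpos hge hden.le
      linarith
    rw [hzeq] at hnum
    linarith

  -- ε → 0
  have hfinal : 0 ≤ 2 * (c t * (y ⬝ᵥ (Ze t *ᵥ y))) - 2 * (y ⬝ᵥ w t) ^ 2 := by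
    by_contra hA
    push_neg at hA
    set A : ℝ := 2 * (c t * (y ⬝ᵥ (Ze t *ᵥ y))) - 2 * (y ⬝ᵥ w t) ^ 2 with hAdef
    set B : ℝ := Real.exp (K * t) * ∑ i, (y i) ^ 2 with hBdef
    have hBnn : 0 ≤ B := mul_nonneg (Real.exp_pos _).le (Finset.sum_nonneg fun i _ => sq_nonneg _)
    have hε : 0 < -A / (2 * (B + 1)) := by
      apply div_pos (by linarith) (by linarith)
    have := hmain _ hε t ⟨ht, le_refl t⟩ y
    rw [hFdef] at this
    simp only at this
    have hF : 0 ≤ A + (-A / (2 * (B + 1))) * B := by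
      rw [hAdef, hBdef]; convert this using 1; ring
    have h2 : (0:ℝ) < 2 * (B + 1) := by linarith
    have h3 : 0 ≤ (A + -A / (2 * (B + 1)) * B) * (2 * (B + 1)) := mul_nonneg hF h2.le
    have h4 : (A + -A / (2 * (B + 1)) * B) * (2 * (B + 1)) = A * (B + 2) := by
      field_simp; ring
    nlinarith [h3, h4, hBnn]
  rw [hcdef] at hfinal
  simp only at hfinal
  nlinarith [hfinal]


lemma fromBlocks_mulVec_elim {n r : ℕ} (A : Matrix (Fin n) (Fin n) ℝ)
    (B : Matrix (Fin r) (Fin r) ℝ) (x : Fin n → ℝ) (y : Fin r → ℝ) :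
    Matrix.fromBlocks A 0 0 B *ᵥ Sum.elim x y = Sum.elim (A *ᵥ x) (B *ᵥ y) := by
  rw [Matrix.fromBlocks_mulVec]
  simp

lemma trace_conj {p' : ℕ} {ι : Type*} [Fintype ι] (L : Matrix (Fin p') ι ℝ)
    (Z : Matrix ι ι ℝ) :
    (L * Z * Lᵀ).trace = ∑ i, (fun j => L i j) ⬝ᵥ (Z *ᵥ fun j => L i j) := by
  simp only [Matrix.trace, Matrix.diag, Matrix.mul_apply, dotProduct, Matrix.mulVec,
    Matrix.transpose_apply, Finset.sum_mul, Finset.mul_sum]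
  refine Finset.sum_congr rfl fun i _ => ?_
  rw [Finset.sum_comm]
  refine Finset.sum_congr rfl fun j _ => Finset.sum_congr rfl fun k _ => by ring

/-- Lemma 4.3: pointwise preliminary error bound between the output of the
full homogeneous bilinear system and the output of a reduced homogeneous system, in terms of
the solution `Z^e` of the augmented generalized Lyapunov ODE. -/
theorem output_error_preliminary_bound
    {n r q p m : ℕ}
    (A : Matrix (Fin n) (Fin n) ℝ) (N : Fin m → Matrix (Fin n) (Fin n) ℝ)
    (X₀ : Matrix (Fin n) (Fin q) ℝ) (C : Matrix (Fin p) (Fin n) ℝ)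
    (At : Matrix (Fin r) (Fin r) ℝ) (Nt : Fin m → Matrix (Fin r) (Fin r) ℝ)
    (Xt₀ : Matrix (Fin r) (Fin q) ℝ) (Ct : Matrix (Fin p) (Fin r) ℝ)
    (v₀ : Fin q → ℝ) (γ : ℝ) (hγ : 0 < γ)
    (u : ℝ → Fin m → ℝ) (hu : Continuous u)
    (huL2 : IntegrableOn (fun t => ∑ k, (u t k) ^ 2) (Set.Ioi 0))
    -- full homogeneous state `x` with output `C x`
    (x : ℝ → Fin n → ℝ) (hx0 : x 0 = X₀.mulVec v₀)
    (hxode : ∀ t, 0 ≤ t →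
      HasDerivAt x (A.mulVec (x t) + ∑ k, u t k • (N k).mulVec (x t)) t)
    -- reduced homogeneous state `xt` with output `Ct xt`
    (xt : ℝ → Fin r → ℝ) (hxt0 : xt 0 = Xt₀.mulVec v₀)
    (hxtode : ∀ t, 0 ≤ t →
      HasDerivAt xt (At.mulVec (xt t) + ∑ k, u t k • (Nt k).mulVec (xt t)) t)
    -- `Ze` solves the augmented generalized Lyapunov matrix ODE
    (Ze : ℝ → Matrix (Fin n ⊕ Fin r) (Fin n ⊕ Fin r) ℝ)
    (hZe0 : Ze 0 = Matrix.fromRows X₀ Xt₀ * (Matrix.fromRows X₀ Xt₀)ᵀ)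
    (hZeode : ∀ t, 0 ≤ t → HasDerivAt Ze
      (Matrix.fromBlocks A 0 0 At * Ze t + Ze t * (Matrix.fromBlocks A 0 0 At)ᵀ
        + (γ ^ 2)⁻¹ • ∑ k,
            Matrix.fromBlocks (N k) 0 0 (Nt k) * Ze t
              * (Matrix.fromBlocks (N k) 0 0 (Nt k))ᵀ) t)
    (t : ℝ) (ht : 0 ≤ t) :
    ∑ i, (C.mulVec (x t) i - Ct.mulVec (xt t) i) ^ 2
      ≤ (Matrix.fromCols C (-Ct) * Ze t * (Matrix.fromCols C (-Ct))ᵀ).trace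
        * Real.exp (∫ v in (0 : ℝ)..t,
            ∑ k, (γ * (if Matrix.fromBlocks (N k) 0 0 (Nt k) = 0 then (0 : ℝ) else u v k)) ^ 2)
        * (∑ i, v₀ i ^ 2) := by
  set Ae : Matrix (Fin n ⊕ Fin r) (Fin n ⊕ Fin r) ℝ := Matrix.fromBlocks A 0 0 At with hAedef
  set NeM : Fin m → Matrix (Fin n ⊕ Fin r) (Fin n ⊕ Fin r) ℝ :=
    fun k => Matrix.fromBlocks (N k) 0 0 (Nt k) with hNedef
  set w : ℝ → (Fin n ⊕ Fin r) → ℝ := fun s => Sum.elim (x s) (xt s) with hwdef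
  have hwder : ∀ s, 0 ≤ s → HasDerivAt w (Ae *ᵥ w s + ∑ k, u s k • (NeM k *ᵥ w s)) s := by
    intro s hs
    have hAv : Ae *ᵥ w s = Sum.elim (A *ᵥ x s) (At *ᵥ xt s) := fromBlocks_mulVec_elim _ _ _ _
    have hNv : ∀ k, NeM k *ᵥ w s = Sum.elim (N k *ᵥ x s) (Nt k *ᵥ xt s) :=
      fun k => fromBlocks_mulVec_elim _ _ _ _
    rw [hasDerivAt_pi]
    intro j
    have hx := hasDerivAt_pi.mp (hxode s hs)
    have hxt := hasDerivAt_pi.mp (hxtode s hs)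
    cases j with
    | inl i =>
      convert hx i using 1
      rfl
      simp only [Pi.add_apply, Finset.sum_apply, Pi.smul_apply, hAv, hNv, Sum.elim_inl,
        smul_eq_mul]
    | inr i =>
      convert hxt i using 1
      rfl
      simp only [Pi.add_apply, Finset.sum_apply, Pi.smul_apply, hAv, hNv, Sum.elim_inr,
        smul_eq_mul]
  have hinit : ∀ y : Fin n ⊕ Fin r → ℝ, (y ⬝ᵥ w 0) ^ 2
      ≤ (∑ i, v₀ i ^ 2) * (y ⬝ᵥ (Ze 0 *ᵥ y)) := by
    intro y
    have hw0 : w 0 = (Matrix.fromRows X₀ Xt₀) *ᵥ v₀ := by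
      rw [hwdef]; simp only [hx0, hxt0]
      rw [Matrix.fromRows_mulVec]
    have hq0 : y ⬝ᵥ (Ze 0 *ᵥ y)
        = ∑ j, (((Matrix.fromRows X₀ Xt₀)ᵀ *ᵥ y) j) ^ 2 := by
      rw [hZe0, ← Matrix.mulVec_mulVec, dot_mulVec_left]
      simp [dotProduct, sq]
    have hp0 : y ⬝ᵥ w 0 = ∑ j, ((Matrix.fromRows X₀ Xt₀)ᵀ *ᵥ y) j * v₀ j := by
      rw [hw0, dot_mulVec_left]; rfl
    rw [hq0, hp0]
    have := Finset.sum_mul_sq_le_sq_mul_sq Finset.univ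
      (fun j => ((Matrix.fromRows X₀ Xt₀)ᵀ *ᵥ y) j) v₀
    calc (∑ j, ((Matrix.fromRows X₀ Xt₀)ᵀ *ᵥ y) j * v₀ j) ^ 2
        ≤ (∑ j, (((Matrix.fromRows X₀ Xt₀)ᵀ *ᵥ y) j) ^ 2) * ∑ j, (v₀ j) ^ 2 := this
      _ = (∑ i, v₀ i ^ 2) * ∑ j, (((Matrix.fromRows X₀ Xt₀)ᵀ *ᵥ y) j) ^ 2 := by ring
  have hcore := fun (y : Fin n ⊕ Fin r → ℝ) =>
    core_bound Ae NeM γ hγ u hu w hwder Ze hZeode (∑ i, v₀ i ^ 2) hinit t ht y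
  -- rewrite the left-hand side
  set L : Matrix (Fin p) (Fin n ⊕ Fin r) ℝ := Matrix.fromCols C (-Ct) with hLdef
  have hLw : ∀ i, C.mulVec (x t) i - Ct.mulVec (xt t) i = (fun j => L i j) ⬝ᵥ w t := by
    intro i
    have h1 : L *ᵥ w t = C *ᵥ x t + (-Ct) *ᵥ xt t := by
      rw [hLdef, hwdef]
      exact Matrix.fromCols_mulVec_sumElim _ _ _ _
    have h2 : (L *ᵥ w t) i = (fun j => L i j) ⬝ᵥ w t := rfl
    rw [← h2, h1]
    simp [Matrix.neg_mulVec, sub_eq_add_neg]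
  have htr : (L * Ze t * Lᵀ).trace = ∑ i, (fun j => L i j) ⬝ᵥ (Ze t *ᵥ fun j => L i j) :=
    trace_conj L (Ze t)
  calc ∑ i, (C.mulVec (x t) i - Ct.mulVec (xt t) i) ^ 2
      = ∑ i, ((fun j => L i j) ⬝ᵥ w t) ^ 2 := by
        exact Finset.sum_congr rfl fun i _ => by rw [hLw i]
    _ ≤ ∑ i, ((fun j => L i j) ⬝ᵥ (Ze t *ᵥ fun j => L i j))
          * Real.exp (∫ v in (0 : ℝ)..t,
              ∑ k, (γ * (if NeM k = 0 then (0 : ℝ) else u v k)) ^ 2)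
          * (∑ i, v₀ i ^ 2) := Finset.sum_le_sum fun i _ => hcore _
    _ = (L * Ze t * Lᵀ).trace
          * Real.exp (∫ v in (0 : ℝ)..t,
              ∑ k, (γ * (if NeM k = 0 then (0 : ℝ) else u v k)) ^ 2)
          * (∑ i, v₀ i ^ 2) := by
        rw [htr, Finset.sum_mul, Finset.sum_mul]
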